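/- arXiv:2510.27008 — 2 statements merged into one kernel-verified Lean document; each statement's English description precedes it below -/
import Mathlib

section
/- Any price profile (p_t^i) in the interior of the feasible region satisfying the first-order conditions (D_t^i - 2p_t^i + c_i) - Σ_{τ=t+1}^T (p_τ^i - c_i)·(N-1)/N = 0 for all i and all 1 ≤ t ≤ T, together with the demand recursions D_{t+1}^i = D_t^i - p_t^i + (1/N)Σ_j p_t^j, is a Nash equilibrium: no firm can increase its cumulative utility U_i = Σ_t (D_t^i - p_t^i)(p_t^i - c_i) by unilaterally changing its price vector. -/
/-- Demands of all `N` firms given the price profile `p : Fin N → ℕ → ℝ`: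
`D_0^i = D1 i` and `D_{t+1}^i = D_t^i - p_t^i + (1/N)·Σ_j p_t^j`. -/
noncomputable def demand (N : ℕ) (D1 : Fin N → ℝ) (p : Fin N → ℕ → ℝ) (i : Fin N) : ℕ → ℝ
  | 0 => D1 i
  | t + 1 => demand N D1 p i t - p i t + (∑ j, p j t) / (N : ℝ)

/-- Cumulative utility of firm `i` over horizon `T`. -/
noncomputable def utility (N T : ℕ) (D1 : Fin N → ℝ) (c : Fin N → ℝ)
    (p : Fin N → ℕ → ℝ) (i : Fin N) : ℝ :=
  ∑ t ∈ Finset.range T, (demand N D1 p i t - p i t) * (p i t - c i)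

private lemma sum_swap_aux (T : ℕ) (f g : ℕ → ℝ) :
    ∑ t ∈ Finset.range T, g t * ∑ τ ∈ Finset.range t, f τ
      = ∑ t ∈ Finset.range T, f t * ∑ τ ∈ Finset.Ioo t T, g τ := by
  have h1 : ∑ t ∈ Finset.range T, g t * ∑ τ ∈ Finset.range t, f τ
      = ∑ t ∈ Finset.range T, ∑ τ ∈ Finset.range t, g t * f τ :=
    Finset.sum_congr rfl fun t _ => Finset.mul_sum _ _ _
  rw [h1, Finset.sum_comm' (t' := Finset.range T) (s' := fun τ => Finset.Ioo τ T)
    (by intro t τ; simp only [Finset.mem_range, Finset.mem_Ioo]; omega)]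
  refine Finset.sum_congr rfl fun τ _ => ?_
  rw [Finset.mul_sum]
  exact Finset.sum_congr rfl fun t _ => mul_comm _ _

private lemma sq_sum_eq (e : ℕ → ℝ) (n : ℕ) :
    (∑ t ∈ Finset.range n, e t) ^ 2
      = ∑ t ∈ Finset.range n, (e t) ^ 2
        + 2 * ∑ t ∈ Finset.range n, e t * ∑ τ ∈ Finset.range t, e τ := by
  induction n with
  | zero => simp
  | succ n ih =>
    rw [Finset.sum_range_succ, Finset.sum_range_succ (f := fun t => (e t)^2),
      Finset.sum_range_succ (f := fun t => e t * ∑ τ ∈ Finset.range t, e τ)]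
    linear_combination ih

private lemma demand_update (N : ℕ) (hN : 0 < N) (D1 : Fin N → ℝ) (p : Fin N → ℕ → ℝ)
    (i : Fin N) (q : ℕ → ℝ) (t : ℕ) :
    demand N D1 (Function.update p i q) i t
      = demand N D1 p i t - ((N : ℝ) - 1) / N * ∑ τ ∈ Finset.range t, (q τ - p i τ) := by
  have hNne : (N : ℝ) ≠ 0 := Nat.cast_ne_zero.mpr hN.ne'
  induction t with
  | zero => simp [demand]
  | succ t ih =>
    have hsum : ∑ j, Function.update p i q j t = (∑ j, p j t) + (q t - p i t) := by
      have h : ∀ j : Fin N, Function.update p i q j t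
          = p j t + (if j = i then q t - p i t else 0) := by
        intro j; by_cases h : j = i <;> simp [h]
      simp only [h, Finset.sum_add_distrib, Finset.sum_ite_eq', Finset.mem_univ, if_true]
    show demand N D1 (Function.update p i q) i t - Function.update p i q i t
        + (∑ j, Function.update p i q j t) / (N : ℝ) = _
    rw [ih, hsum, Function.update_self, Finset.sum_range_succ]
    show _ = demand N D1 p i t - p i t + (∑ j, p j t) / (N : ℝ) - _
    field_simp
    ring

/-- Any price profile in the interior of the feasible region satisfying the
first-order conditions is a Nash equilibrium: no firm can increase its
cumulative utility by unilaterally changing its price vector. -/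
theorem foc_implies_nash (N T : ℕ) (hN : 0 < N)
    (D1 c : Fin N → ℝ) (pmax : ℝ) (p : Fin N → ℕ → ℝ)
    (hinterior : ∀ i, ∀ t < T, c i < p i t ∧ p i t < pmax)
    (hfeas : ∀ i, ∀ t ≤ T, 0 ≤ demand N D1 p i t)
    (hfoc : ∀ i, ∀ t < T,
      (demand N D1 p i t - 2 * p i t + c i) -
        ∑ τ ∈ Finset.Ioo t T, (p i τ - c i) * (((N : ℝ) - 1) / N) = 0) :
    ∀ i : Fin N, ∀ q : ℕ → ℝ,
      utility N T D1 c (Function.update p i q) i ≤ utility N T D1 c p i := by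
  intro i q
  have hNpos : (0 : ℝ) < N := Nat.cast_pos.mpr hN
  set k : ℝ := ((N : ℝ) - 1) / N with hk
  have hk0 : 0 ≤ k := by
    apply div_nonneg _ hNpos.le
    have : (1 : ℝ) ≤ N := by exact_mod_cast hN
    linarith
  have hk1 : k ≤ 1 := by
    rw [hk, div_le_one hNpos]; linarith
  set e : ℕ → ℝ := fun t => q t - p i t with he
  set d : ℕ → ℝ := fun t => demand N D1 p i t with hd
  -- Step A: utility of the deviation
  have hA : utility N T D1 c (Function.update p i q) i
      = ∑ t ∈ Finset.range T, (d t - k * ∑ τ ∈ Finset.range t, e τ - q t) * (q t - c i) := by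
    unfold utility
    refine Finset.sum_congr rfl fun t _ => ?_
    rw [demand_update N hN D1 p i q t, Function.update_self]
  -- per-term expansion
  have hper : ∀ t, (d t - k * ∑ τ ∈ Finset.range t, e τ - q t) * (q t - c i)
      - (d t - p i t) * (p i t - c i)
      = e t * (d t - 2 * p i t + c i)
        - ((p i t - c i) * k) * ∑ τ ∈ Finset.range t, e τ
        - k * (e t * ∑ τ ∈ Finset.range t, e τ) - (e t) ^ 2 := by
    intro t
    have hq : q t = p i t + e t := by simp [he]
    rw [hq]; ring
  have hdiff : utility N T D1 c (Function.update p i q) i - utility N T D1 c p i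
      = ∑ t ∈ Finset.range T,
            e t * ((d t - 2 * p i t + c i) - ∑ τ ∈ Finset.Ioo t T, (p i τ - c i) * k)
        - k * ∑ t ∈ Finset.range T, e t * ∑ τ ∈ Finset.range t, e τ
        - ∑ t ∈ Finset.range T, (e t) ^ 2 := by
    rw [hA]
    unfold utility
    rw [← Finset.sum_sub_distrib]
    have : ∑ t ∈ Finset.range T,
        ((d t - k * ∑ τ ∈ Finset.range t, e τ - q t) * (q t - c i)
          - (d t - p i t) * (p i t - c i))
        = ∑ t ∈ Finset.range T, e t * (d t - 2 * p i t + c i)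
          - ∑ t ∈ Finset.range T, ((p i t - c i) * k) * ∑ τ ∈ Finset.range t, e τ
          - k * ∑ t ∈ Finset.range T, e t * ∑ τ ∈ Finset.range t, e τ
          - ∑ t ∈ Finset.range T, (e t) ^ 2 := by
      rw [Finset.sum_congr rfl fun t _ => hper t]
      rw [Finset.mul_sum]
      simp only [Finset.sum_sub_distrib]
    rw [this, sum_swap_aux T e (fun t => (p i t - c i) * k)]
    have : ∑ t ∈ Finset.range T, e t * ∑ τ ∈ Finset.Ioo t T, (p i τ - c i) * k
        = ∑ t ∈ Finset.range T, e t * ∑ τ ∈ Finset.Ioo t T, (p i τ - c i) * k := rfl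
    rw [← Finset.sum_sub_distrib]
    congr 2
    refine Finset.sum_congr rfl fun t _ => ?_
    ring
  -- linear term vanishes by FOC
  have hlin : ∑ t ∈ Finset.range T,
      e t * ((d t - 2 * p i t + c i) - ∑ τ ∈ Finset.Ioo t T, (p i τ - c i) * k) = 0 := by
    refine Finset.sum_eq_zero fun t ht => ?_
    rw [Finset.mem_range] at ht
    have := hfoc i t ht
    rw [hd]
    simp only [hk]
    rw [this, mul_zero]
  have hsq := sq_sum_eq e T
  have hEsq : 0 ≤ ∑ t ∈ Finset.range T, (e t) ^ 2 :=
    Finset.sum_nonneg fun t _ => sq_nonneg _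
  have hS2 : 0 ≤ (∑ t ∈ Finset.range T, e t) ^ 2 := sq_nonneg _
  nlinarith [hdiff, hlin, hsq, hEsq, hS2, hk0, hk1,
    mul_nonneg hk0 hEsq, mul_nonneg hk0 hS2]
end

section
/- For T = 2, N firms, costs c_i, and initial demands D_1^i, the system of first-order conditions D_1^i - 2p_1^i + c_i - (p_2^i - c_i)(N-1)/N = 0 and D_2^i - 2p_2^i + c_i = 0 with D_2^i = D_1^i - p_1^i + (1/N)Σ_j p_1^j has the explicit per-firm relation p_2^i = (D_2^i + c_i)/2, and substituting yields a linear system in the first-period prices (p_1^1,...,p_1^N) whose coefficient matrix is invertible, so the no-observation equilibrium candidate is unique. -/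
/-- For `T = 2`, the first-order conditions
`D_1^i - 2p_1^i + c_i - (p_2^i - c_i)(N-1)/N = 0`, `D_2^i - 2p_2^i + c_i = 0`
with `D_2^i = D_1^i - p_1^i + (1/N)Σ_j p_1^j` imply
`p_2^i = (D_2^i + c_i)/2`, and the solution is unique. -/
theorem two_period_unique_candidate (N : ℕ) (hN : 0 < N)
    (c D1 : Fin N → ℝ) :
    (∀ p1 p2 : Fin N → ℝ,
      (∀ i, D1 i - 2 * p1 i + c i - (p2 i - c i) * (((N : ℝ) - 1) / N) = 0) →
      (∀ i, (D1 i - p1 i + (∑ j, p1 j) / (N : ℝ)) - 2 * p2 i + c i = 0) →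
      ∀ i, p2 i = ((D1 i - p1 i + (∑ j, p1 j) / (N : ℝ)) + c i) / 2) ∧
    (∀ p1 p2 q1 q2 : Fin N → ℝ,
      (∀ i, D1 i - 2 * p1 i + c i - (p2 i - c i) * (((N : ℝ) - 1) / N) = 0) →
      (∀ i, (D1 i - p1 i + (∑ j, p1 j) / (N : ℝ)) - 2 * p2 i + c i = 0) →
      (∀ i, D1 i - 2 * q1 i + c i - (q2 i - c i) * (((N : ℝ) - 1) / N) = 0) →
      (∀ i, (D1 i - q1 i + (∑ j, q1 j) / (N : ℝ)) - 2 * q2 i + c i = 0) →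
      p1 = q1 ∧ p2 = q2) := by
  have hn : (0:ℝ) < (N:ℝ) := by exact_mod_cast hN
  have hn0 : (N:ℝ) ≠ 0 := ne_of_gt hn
  constructor
  · intro p1 p2 h1 h2 i
    have := h2 i
    linarith
  · intro p1 p2 q1 q2 hp1 hp2 hq1 hq2
    set n : ℝ := (N:ℝ)
    set S : ℝ := ∑ j, (p1 j - q1 j) with hS
    have hsub : (∑ j, p1 j) - (∑ j, q1 j) = S := (Finset.sum_sub_distrib p1 q1).symm
    -- Subtracted first-order conditions, with denominators cleared.
    have hA : ∀ i, (p2 i - q2 i) * (n - 1) = -2 * (p1 i - q1 i) * n := by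
      intro i
      have e1 := hp1 i
      have e3 := hq1 i
      have e1' : (D1 i - 2 * p1 i + c i) * n - (p2 i - c i) * (n - 1) = 0 := by
        have : (p2 i - c i) * ((n - 1) / n) * n = (p2 i - c i) * (n - 1) := by
          field_simp
        nlinarith [e1, this]
      have e3' : (D1 i - 2 * q1 i + c i) * n - (q2 i - c i) * (n - 1) = 0 := by
        have : (q2 i - c i) * ((n - 1) / n) * n = (q2 i - c i) * (n - 1) := by
          field_simp
        nlinarith [e3, this]
      linear_combination e3' - e1'
    have hB : ∀ i, 2 * (p2 i - q2 i) * n = -(p1 i - q1 i) * n + S := by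
      intro i
      have e2 := hp2 i
      have e4 := hq2 i
      have e2' : (D1 i - p1 i) * n + (∑ j, p1 j) - 2 * p2 i * n + c i * n = 0 := by
        have : (∑ j, p1 j) / n * n = (∑ j, p1 j) := by field_simp
        nlinarith [e2, this]
      have e4' : (D1 i - q1 i) * n + (∑ j, q1 j) - 2 * q2 i * n + c i * n = 0 := by
        have : (∑ j, q1 j) / n * n = (∑ j, q1 j) := by field_simp
        nlinarith [e4, this]
      linear_combination e4' - e2' + hsub
    -- key per-firm relation
    have key : ∀ i, (p1 i - q1 i) * (3 * n + 1) * n = -(S * (n - 1)) := by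
      intro i
      have h1 := hA i
      have h2 := hB i
      have h3 : (-(p1 i - q1 i) * n + S) * (n - 1) = -4 * (p1 i - q1 i) * n * n := by
        calc (-(p1 i - q1 i) * n + S) * (n - 1)
            = (2 * (p2 i - q2 i) * n) * (n - 1) := by rw [h2]
          _ = 2 * n * ((p2 i - q2 i) * (n - 1)) := by ring
          _ = 2 * n * (-2 * (p1 i - q1 i) * n) := by rw [h1]
          _ = -4 * (p1 i - q1 i) * n * n := by ring
      linear_combination h3
    -- sum the key relation to get S = 0
    have hsum : S * (3 * n + 1) * n = n * (-(S * (n - 1))) := by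
      calc S * (3 * n + 1) * n = ∑ j, (p1 j - q1 j) * (3 * n + 1) * n := by
            rw [hS, Finset.sum_mul, Finset.sum_mul]
        _ = ∑ _j : Fin N, -(S * (n - 1)) := Finset.sum_congr rfl (fun j _ => key j)
        _ = n * (-(S * (n - 1))) := by
            simp [Finset.sum_const, mul_comm]
            exact Or.inl rfl
    have hS0 : S = 0 := by
      have h4 : S * (4 * n * n) = 0 := by linear_combination hsum
      have hpos : (0:ℝ) < 4 * n * n := by positivity
      rcases mul_eq_zero.mp h4 with h | h
      · exact h
      · exact absurd h (ne_of_gt hpos)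
    have hu : ∀ i, p1 i = q1 i := by
      intro i
      have h5 := key i
      rw [hS0] at h5
      have h6 : (p1 i - q1 i) * ((3 * n + 1) * n) = 0 := by linear_combination h5
      have hpos : (0:ℝ) < (3 * n + 1) * n := by positivity
      rcases mul_eq_zero.mp h6 with h | h
      · linarith
      · exact absurd h (ne_of_gt hpos)
    have hp1q1 : p1 = q1 := funext hu
    refine ⟨hp1q1, funext fun i => ?_⟩
    have h7 := hB i
    have h8 := hu i
    rw [hS0] at h7
    have : 2 * (p2 i - q2 i) * n = 0 := by rw [h7, h8]; ring
    rcases mul_eq_zero.mp this with h | h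
    · rcases mul_eq_zero.mp h with h' | h'
      · norm_num at h'
      · linarith
    · exact absurd h hn0
end
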